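/- Let Σ be a finite alphabet, ε ∈ (0,1), 2 ≤ q ≤ n, and let P be a nonempty property of Σ-edge-colored ordered graphs on n vertices. Suppose there is a set A of Σ-edge-colored ordered graphs on q vertices such that Σ_{H∈A} t(H,G) ≥ 2/3 for every G ∈ P and Σ_{H∈A} t(H,G) ≤ 1/3 for every G that is ε-far from P. Then for every G ∈ P and every G' with d_e(G,G') ≤ 1/(20·C(q,2)), G' is ε-close to P. -/

import Mathlib

/-- The set of (ordered) edges of `[n]`: pairs `(i,j)` with `i < j`. -/
abbrev Edge (n : ℕ) := {p : Fin n × Fin n // p.1 < p.2}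

/-- A `α`-edge-colored ordered graph on `n` vertices. -/
abbrev OGraph (n : ℕ) (α : Type) := Edge n → α

/-- The edge `{i,j}` for `i ≠ j`. -/
def mkEdge {n : ℕ} (i j : Fin n) (h : i ≠ j) : Edge n :=
  if hlt : i < j then ⟨(i, j), hlt⟩ else ⟨(j, i), lt_of_le_of_ne (not_lt.mp hlt) h.symm⟩

/-- `σ` is an adjacent transposition: it swaps some `x` and `x+1` and fixes the rest. -/
def IsAdjSwap {n : ℕ} (σ : Equiv.Perm (Fin n)) : Prop :=
  ∃ (x : Fin n) (h : x.val + 1 < n), σ = Equiv.swap x ⟨x.val + 1, h⟩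

/-- Relabeling a graph by a permutation: `(relabel σ G)({i,j}) = G({σ i, σ j})`.
For `σ` an adjacent transposition this is the basic move at `σ`. -/
def relabel {n : ℕ} {α : Type} (σ : Equiv.Perm (Fin n)) (G : OGraph n α) : OGraph n α :=
  fun e => G (mkEdge (σ e.1.1) (σ e.1.2) (fun hEq => (ne_of_lt e.2) (σ.injective hEq)))

/-- `H` is obtained from `G` by exactly `m` basic moves. -/
def MovesTo {n : ℕ} {α : Type} (G H : OGraph n α) (m : ℕ) : Prop :=
  ∃ l : List (Equiv.Perm (Fin n)), l.length = m ∧ (∀ σ ∈ l, IsAdjSwap σ) ∧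
    H = l.foldl (fun g σ => relabel σ g) G

/-- Normalized Hamming distance between two ordered graphs. -/
noncomputable def dHam {n : ℕ} {α : Type} (G H : OGraph n α) : ℝ :=
  (Nat.card {e : Edge n // G e ≠ H e} : ℝ) / (n.choose 2)


/-- Pull back a graph along an order-embedding `Fin q ↪o Fin n`: the induced ordered
subgraph on the image of `f`. -/
def pull {q n : ℕ} {α : Type} (f : Fin q ↪o Fin n) (G : OGraph n α) : OGraph q α :=
  fun e => G ⟨(f e.1.1, f e.1.2), f.strictMono e.2⟩

/-- The `q`-element vertex subset `S` of `[n]` induces (an ordered copy of) `H` in `G`. -/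
def Induces {q n : ℕ} {α : Type} (G : OGraph n α) (S : Finset (Fin n)) (H : OGraph q α) : Prop :=
  ∃ h : S.card = q, pull (S.orderEmbOfFin h) G = H

/-- `t(H,G)`: the number of `q`-element vertex subsets of `[n]` whose induced ordered
subgraph in `G` is (isomorphic to) `H`, divided by `C(n,q)`. -/
noncomputable def tDens {q n : ℕ} {α : Type} (H : OGraph q α) (G : OGraph n α) : ℝ :=
  (Nat.card {S : Finset (Fin n) // Induces G S H} : ℝ) / (n.choose q)

section Aux

variable {n q : ℕ} {α : Type}

lemma swap_mono {a b : Fin n} (hab : b.val = a.val + 1)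
    {S : Finset (Fin n)} (hS : ¬ (a ∈ S ∧ b ∈ S))
    {s t : Fin n} (hs : s ∈ S) (ht : t ∈ S) (hst : s < t) :
    Equiv.swap a b s < Equiv.swap a b t := by
  have hst' : s.val < t.val := hst
  rw [Fin.lt_def, Equiv.swap_apply_def, Equiv.swap_apply_def]
  split_ifs <;>
  first
    | (simp only [Fin.ext_iff] at *; omega)
    | exact absurd ⟨(‹s = a› : s = a) ▸ hs, (‹t = b› : t = b) ▸ ht⟩ hS

lemma pull_relabel_swap {a b : Fin n} (hab : b.val = a.val + 1)
    (G : OGraph n α) (S : Finset (Fin n)) (hSq : S.card = q)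
    (hS : ¬ (a ∈ S ∧ b ∈ S)) (hTq : (S.image (Equiv.swap a b)).card = q) :
    pull ((S.image (Equiv.swap a b)).orderEmbOfFin hTq) G
      = pull (S.orderEmbOfFin hSq) (relabel (Equiv.swap a b) G) := by
  set σ := Equiv.swap a b with hσ
  set f := S.orderEmbOfFin hSq with hf
  have hmem : ∀ i, σ (f i) ∈ S.image σ := fun i =>
    Finset.mem_image_of_mem σ (S.orderEmbOfFin_mem hSq i)
  have hmono : StrictMono (fun i => σ (f i)) := fun i j hij =>
    swap_mono hab hS (S.orderEmbOfFin_mem hSq i) (S.orderEmbOfFin_mem hSq j)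
      (f.strictMono hij)
  have huniq := Finset.orderEmbOfFin_unique hTq hmem hmono
  funext e
  have hlt : σ (f e.1.1) < σ (f e.1.2) :=
    swap_mono hab hS (S.orderEmbOfFin_mem hSq _) (S.orderEmbOfFin_mem hSq _)
      (f.strictMono e.2)
  show G _ = G (mkEdge (σ (f e.1.1)) (σ (f e.1.2)) _)
  rw [mkEdge, dif_pos hlt]
  congr 1
  exact Subtype.ext (Prod.ext (congrFun huniq.symm _) (congrFun huniq.symm _))

open Classical in
noncomputable def cnt (A : Finset (OGraph q α)) (G : OGraph n α) : ℕ :=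
  (Finset.univ.filter (fun S : Finset (Fin n) => ∃ H ∈ A, Induces G S H)).card

lemma induces_unique (G : OGraph n α) (S : Finset (Fin n)) {H H' : OGraph q α}
    (h1 : Induces G S H) (h2 : Induces G S H') : H = H' := by
  obtain ⟨c1, e1⟩ := h1
  obtain ⟨c2, e2⟩ := h2
  exact e1.symm.trans e2

lemma tDens_sum (A : Finset (OGraph q α)) (G : OGraph n α) :
    ∑ H ∈ A, tDens H G = (cnt A G : ℝ) / (n.choose q) := by
  classical
  unfold tDens cnt
  rw [← Finset.sum_div]
  congr 1
  have h1 : ∀ H : OGraph q α, Nat.card {S : Finset (Fin n) // Induces G S H}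
      = (Finset.univ.filter (fun S => Induces G S H)).card := by
    intro H
    simp [Nat.card_eq_fintype_card, Fintype.card_subtype]
  rw [← Nat.cast_sum]
  norm_cast
  simp_rw [h1]
  rw [← Finset.card_biUnion]
  · congr 1
    ext S
    simp
  · intro H hH H' hH' hne
    simp only [Finset.disjoint_left, Finset.mem_filter]
    rintro S ⟨-, hSH⟩ ⟨-, hSH'⟩
    exact hne (induces_unique G S hSH hSH')

lemma both_count (a b : Fin n) (hab : a ≠ b)
    (F : Finset (Finset (Fin n))) (hF : ∀ S ∈ F, a ∈ S ∧ b ∈ S ∧ S.card = q) :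
    F.card ≤ (n - 2).choose (q - 2) := by
  classical
  have hcard : (Finset.univ \ ({a, b} : Finset (Fin n))).card = n - 2 := by
    rw [Finset.card_sdiff_of_subset (Finset.subset_univ _), Finset.card_pair hab]
    simp
  calc F.card ≤ (((Finset.univ \ ({a, b} : Finset (Fin n))).powersetCard (q - 2))).card := by
        apply Finset.card_le_card_of_injOn (fun S => S \ {a, b})
        · intro S hS
          obtain ⟨ha, hb, hq⟩ := hF S hS
          rw [Finset.mem_coe, Finset.mem_powersetCard]
          constructor
          · exact Finset.sdiff_subset_sdiff (Finset.subset_univ S) le_rfl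
          · rw [Finset.card_sdiff_of_subset (by
              rw [Finset.insert_subset_iff, Finset.singleton_subset_iff]; exact ⟨ha, hb⟩),
              Finset.card_pair hab, hq]
        · intro S1 h1 S2 h2 heq
          obtain ⟨ha1, hb1, -⟩ := hF S1 h1
          obtain ⟨ha2, hb2, -⟩ := hF S2 h2
          have hs1 : ({a, b} : Finset (Fin n)) ⊆ S1 := by
            rw [Finset.insert_subset_iff, Finset.singleton_subset_iff]; exact ⟨ha1, hb1⟩
          have hs2 : ({a, b} : Finset (Fin n)) ⊆ S2 := by
            rw [Finset.insert_subset_iff, Finset.singleton_subset_iff]; exact ⟨ha2, hb2⟩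
          rw [← Finset.sdiff_union_of_subset hs1, ← Finset.sdiff_union_of_subset hs2]
          simp only at heq
          rw [heq]
      _ = (n - 2).choose (q - 2) := by rw [Finset.card_powersetCard, hcard]

lemma cnt_step (A : Finset (OGraph q α)) (G : OGraph n α)
    {σ : Equiv.Perm (Fin n)} (hσ : IsAdjSwap σ) :
    cnt A G ≤ cnt A (relabel σ G) + (n - 2).choose (q - 2) := by
  classical
  obtain ⟨a, hb, rfl⟩ := hσ
  set b : Fin n := ⟨a.val + 1, hb⟩ with hbdef
  have hab : b.val = a.val + 1 := rfl
  have hane : a ≠ b := by simp [Fin.ext_iff, hbdef]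
  set σ := Equiv.swap a b with hσdef
  have hswap : ∀ x : Fin n, σ (σ x) = x := fun x => Equiv.swap_apply_self a b x
  have himg : ∀ (x : Fin n) (S : Finset (Fin n)), x ∈ S.image σ ↔ σ x ∈ S := by
    intro x S
    rw [Finset.mem_image]
    constructor
    · rintro ⟨y, hy, rfl⟩; rwa [hswap]
    · intro h; exact ⟨σ x, h, hswap x⟩
  have hinvol : ∀ S : Finset (Fin n), (S.image σ).image σ = S := by
    intro S; ext x; rw [himg, himg, hswap]
  have hboth : ∀ S : Finset (Fin n), (a ∈ S.image σ ∧ b ∈ S.image σ) ↔ (a ∈ S ∧ b ∈ S) := by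
    intro S
    rw [himg, himg, hσdef, Equiv.swap_apply_left, Equiv.swap_apply_right]
    exact and_comm
  set good : OGraph n α → Finset (Fin n) → Prop :=
    fun G0 S => ∃ H ∈ A, Induces G0 S H with hgood
  have key : ∀ S : Finset (Fin n), ¬(a ∈ S ∧ b ∈ S) →
      (good (relabel σ G) S ↔ good G (S.image σ)) := by
    intro S hS
    constructor
    · rintro ⟨H, hH, hc, he⟩
      have hTc : (S.image σ).card = q := by
        rw [Finset.card_image_of_injective _ σ.injective, hc]
      refine ⟨H, hH, hTc, ?_⟩
      rw [pull_relabel_swap hab G S hc hS hTc]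
      exact he
    · rintro ⟨H, hH, hc, he⟩
      have hSc : S.card = q := by
        rw [← Finset.card_image_of_injective S σ.injective]; exact hc
      refine ⟨H, hH, hSc, ?_⟩
      rw [← pull_relabel_swap hab G S hSc hS hc]
      exact he
  have keyG : ∀ S : Finset (Fin n), ¬(a ∈ S ∧ b ∈ S) →
      (good G S ↔ good (relabel σ G) (S.image σ)) := by
    intro S hS
    have h2 : ¬(a ∈ S.image σ ∧ b ∈ S.image σ) := fun h => hS ((hboth S).mp h)
    rw [key (S.image σ) h2, hinvol]
  set FG := Finset.univ.filter (good G) with hFG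
  set FG' := Finset.univ.filter (good (relabel σ G)) with hFG'
  have hsplit : (FG.filter (fun S => a ∈ S ∧ b ∈ S)).card
      + (FG.filter (fun S => ¬(a ∈ S ∧ b ∈ S))).card = FG.card :=
    Finset.card_filter_add_card_filter_not _
  have hb1 : (FG.filter (fun S => a ∈ S ∧ b ∈ S)).card ≤ (n - 2).choose (q - 2) := by
    apply both_count a b hane
    intro S hS
    simp only [hFG, Finset.mem_filter, Finset.mem_univ, true_and] at hS
    obtain ⟨⟨H, hH, hc, -⟩, ha', hb'⟩ := hS
    exact ⟨ha', hb', hc⟩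
  have hb2 : (FG.filter (fun S => ¬(a ∈ S ∧ b ∈ S))).card ≤ FG'.card := by
    apply Finset.card_le_card_of_injOn (fun S => S.image σ)
    · intro S hS
      simp only [hFG, hFG', Finset.mem_coe, Finset.mem_filter, Finset.mem_univ, true_and] at hS ⊢
      exact (keyG S hS.2).mp hS.1
    · intro S1 h1 S2 h2 heq
      simp only at heq
      rw [← hinvol S1, heq, hinvol]
  have : cnt A G = FG.card := rfl
  have h' : cnt A (relabel σ G) = FG'.card := rfl
  omega

lemma cnt_fold (A : Finset (OGraph q α)) (G : OGraph n α)
    (l : List (Equiv.Perm (Fin n))) (hl : ∀ σ ∈ l, IsAdjSwap σ) :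
    cnt A G ≤ cnt A (l.foldl (fun g σ => relabel σ g) G)
      + l.length * (n - 2).choose (q - 2) := by
  induction l generalizing G with
  | nil => simp
  | cons σ l ih =>
    simp only [List.foldl_cons, List.length_cons]
    have h1 := cnt_step A G (hl σ (List.mem_cons_self (a := σ) (l := l)))
    have h2 := ih (relabel σ G) (fun τ hτ => hl τ (List.mem_cons_of_mem σ hτ))
    calc cnt A G ≤ cnt A (relabel σ G) + (n - 2).choose (q - 2) := h1
      _ ≤ (cnt A (l.foldl (fun g σ => relabel σ g) (relabel σ G))
            + l.length * (n - 2).choose (q - 2)) + (n - 2).choose (q - 2) := by omega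
      _ = _ := by ring

end Aux

theorem stmt4 {q n : ℕ} (hq : 2 ≤ q) (hqn : q ≤ n) {α : Type} [Fintype α]
    (ε : ℝ) (hε0 : 0 < ε) (hε1 : ε < 1)
    (P : Set (OGraph n α)) (hP : P.Nonempty)
    (A : Finset (OGraph q α))
    (hpos : ∀ G ∈ P, (2 : ℝ) / 3 ≤ ∑ H ∈ A, tDens H G)
    (hneg : ∀ G : OGraph n α, (∀ G'' ∈ P, ε < dHam G G'') → ∑ H ∈ A, tDens H G ≤ 1 / 3)
    (G : OGraph n α) (hG : G ∈ P) (G' : OGraph n α)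
    (hGG' : ∃ m : ℕ, MovesTo G G' m ∧
      (m : ℝ) / (n.choose 2) ≤ 1 / (20 * (q.choose 2 : ℝ))) :
    ∃ G'' ∈ P, dHam G' G'' ≤ ε := by
  obtain ⟨m, ⟨l, hlen, hl, rfl⟩, hm⟩ := hGG'
  by_contra hcon
  push_neg at hcon
  set G' := l.foldl (fun g σ => relabel σ g) G with hG'
  have hfar : ∀ G'' ∈ P, ε < dHam G' G'' := fun G'' hG'' => hcon G'' hG''
  have hle := hneg G' hfar
  -- counting bound
  have hcnt : cnt A G ≤ cnt A G' + m * (n - 2).choose (q - 2) := by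
    rw [← hlen]; exact cnt_fold A G l hl
  -- positivity
  have hn2 : 2 ≤ n := hq.trans hqn
  have hCnq : (0 : ℝ) < (n.choose q : ℝ) := by
    exact_mod_cast Nat.choose_pos hqn
  have hCn2 : (0 : ℝ) < (n.choose 2 : ℝ) := by
    exact_mod_cast Nat.choose_pos hn2
  have hCq2 : (0 : ℝ) < (q.choose 2 : ℝ) := by
    exact_mod_cast Nat.choose_pos hq
  -- the choose identity
  have hid : (n.choose q : ℝ) * (q.choose 2 : ℝ)
      = (n.choose 2 : ℝ) * ((n - 2).choose (q - 2) : ℝ) := by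
    exact_mod_cast congrArg (Nat.cast (R := ℝ)) (Nat.choose_mul (n := n) hq)
  -- D / Cnq = Cq2 / Cn2
  have hD : ((n - 2).choose (q - 2) : ℝ) / (n.choose q : ℝ)
      = (q.choose 2 : ℝ) / (n.choose 2 : ℝ) := by
    field_simp
    nlinarith [hid]
  have hsumG := hpos G hG
  rw [tDens_sum] at hsumG hle
  -- m * D / Cnq ≤ 1/20
  have hmD : (m : ℝ) * (((n - 2).choose (q - 2) : ℝ) / (n.choose q : ℝ)) ≤ 1 / 20 := by
    rw [hD]
    calc (m : ℝ) * ((q.choose 2 : ℝ) / (n.choose 2 : ℝ))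
        = ((m : ℝ) / (n.choose 2 : ℝ)) * (q.choose 2 : ℝ) := by ring
      _ ≤ (1 / (20 * (q.choose 2 : ℝ))) * (q.choose 2 : ℝ) :=
          mul_le_mul_of_nonneg_right hm hCq2.le
      _ = 1 / 20 := by field_simp
  have hcntR : (cnt A G : ℝ) ≤ (cnt A G' : ℝ)
      + (m : ℝ) * (((n - 2).choose (q - 2) : ℕ) : ℝ) := by exact_mod_cast hcnt
  have hdiv : (cnt A G : ℝ) / (n.choose q : ℝ)
      ≤ ((cnt A G' : ℝ) + (m : ℝ) * (((n - 2).choose (q - 2) : ℕ) : ℝ)) / (n.choose q : ℝ) := by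
    gcongr
  have hexp : ((cnt A G' : ℝ) + (m : ℝ) * (((n - 2).choose (q - 2) : ℕ) : ℝ)) / (n.choose q : ℝ)
      = (cnt A G' : ℝ) / (n.choose q : ℝ)
        + (m : ℝ) * ((((n - 2).choose (q - 2) : ℕ) : ℝ) / (n.choose q : ℝ)) := by
    ring
  linarith [hdiv, hexp ▸ hdiv]
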